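/- Let K be the convex hull of a non-separable family of closed disks D₁, …, D_m in ℝ² with radii r₁, …, r_m, and set D = 2(r₁ + ⋯ + r_m) (the NS-diameter). Suppose planks P₁, …, P_N (closed regions between pairs of parallel lines, with widths w₁, …, w_N) form an r-fold packing in K: each P_i ∩ K is contained in K and every point of K lies in the interior of at most r of the sets P_i ∩ K, and moreover the orthogonal projection of P_i onto its normal direction is contained in the projection of K. Then w₁ + ⋯ + w_N ≤ r·D. -/

import Mathlib

open Real MeasureTheory RealInnerProductSpace

open Set

lemma chord0 {ρ : ℝ} (hρ : 0 < ρ) :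
    ∫⁻ t : ℝ, ENNReal.ofReal (√(ρ ^ 2 - t ^ 2))⁻¹ = ENNReal.ofReal π := by
  have hzero : ∀ t : ℝ, t ∉ Ioo (-ρ) ρ → ENNReal.ofReal (√(ρ ^ 2 - t ^ 2))⁻¹ = 0 := by
    intro t ht
    have hle : ρ ≤ |t| := by
      rcases not_and_or.mp ht with h | h
      · push_neg at h; calc ρ ≤ -t := by linarith
          _ ≤ |t| := neg_le_abs t
      · push_neg at h; exact h.trans (le_abs_self t)
    have h2 : ρ ^ 2 - t ^ 2 ≤ 0 := by
      have := pow_le_pow_left₀ hρ.le hle 2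
      rw [sq_abs] at this; linarith
    rw [Real.sqrt_eq_zero_of_nonpos h2, inv_zero, ENNReal.ofReal_zero]
  have hres : ∫⁻ t : ℝ, ENNReal.ofReal (√(ρ ^ 2 - t ^ 2))⁻¹
      = ∫⁻ t in Ioo (-ρ) ρ, ENNReal.ofReal (√(ρ ^ 2 - t ^ 2))⁻¹ := by
    rw [← lintegral_indicator measurableSet_Ioo _]
    congr 1; funext t
    by_cases ht : t ∈ Ioo (-ρ) ρ
    · simp [Set.indicator_of_mem ht]
    · simp [Set.indicator_of_notMem ht, hzero t ht]
  have himg : (fun θ : ℝ => ρ * sin θ) '' Ioo (-(π/2)) (π/2) = Ioo (-ρ) ρ := by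
    ext y
    constructor
    · rintro ⟨θ, hθ, rfl⟩
      have h1 : sin θ < 1 := by
        have := Real.strictMonoOn_sin (Set.mem_Icc.mpr ⟨hθ.1.le, hθ.2.le⟩)
          (Set.mem_Icc.mpr ⟨by linarith [Real.pi_pos], le_refl (π/2)⟩) hθ.2
        rwa [Real.sin_pi_div_two] at this
      have h2 : -1 < sin θ := by
        have := Real.strictMonoOn_sin (Set.mem_Icc.mpr ⟨le_refl (-(π/2)), by linarith [Real.pi_pos]⟩)
          (Set.mem_Icc.mpr ⟨hθ.1.le, hθ.2.le⟩) hθ.1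
        rwa [Real.sin_neg, Real.sin_pi_div_two] at this
      refine mem_Ioo.mpr ⟨?_, ?_⟩
      · show -ρ < ρ * sin θ; nlinarith
      · show ρ * sin θ < ρ; nlinarith
    · intro hy
      refine ⟨arcsin (y / ρ), ⟨?_, ?_⟩, ?_⟩
      · rw [Real.neg_pi_div_two_lt_arcsin]
        rw [lt_div_iff₀ hρ]; linarith [hy.1]
      · rw [Real.arcsin_lt_pi_div_two]
        rw [div_lt_one hρ]; exact hy.2
      · show ρ * sin (arcsin (y / ρ)) = y
        rw [Real.sin_arcsin (by rw [le_div_iff₀ hρ]; linarith [hy.1]) (by rw [div_le_one hρ]; exact hy.2.le)]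
        field_simp
  have hinj : Set.InjOn (fun θ : ℝ => ρ * sin θ) (Ioo (-(π/2)) (π/2)) := by
    intro x hx y hy h
    exact Real.injOn_sin (Ioo_subset_Icc_self hx) (Ioo_subset_Icc_self hy)
      (mul_left_cancel₀ hρ.ne' h)
  have hder : ∀ θ ∈ Ioo (-(π/2)) (π/2), HasFDerivWithinAt (fun θ : ℝ => ρ * sin θ)
      ((1 : ℝ →L[ℝ] ℝ).smulRight (ρ * cos θ)) (Ioo (-(π/2)) (π/2)) θ :=
    fun θ _ => ((Real.hasDerivAt_sin θ).const_mul ρ).hasDerivWithinAt.hasFDerivWithinAt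
  rw [hres, ← himg,
    MeasureTheory.lintegral_image_eq_lintegral_abs_det_fderiv_mul volume measurableSet_Ioo hder hinj]
  have hcong : ∀ θ ∈ Ioo (-(π/2)) (π/2),
      ENNReal.ofReal |((1 : ℝ →L[ℝ] ℝ).smulRight (ρ * cos θ)).det|
        * ENNReal.ofReal (√(ρ ^ 2 - (ρ * sin θ) ^ 2))⁻¹ = 1 := by
    intro θ hθ
    have hcos : 0 < cos θ := Real.cos_pos_of_mem_Ioo hθ
    have hpos : 0 < ρ * cos θ := mul_pos hρ hcos
    have hsq : ρ ^ 2 - (ρ * sin θ) ^ 2 = (ρ * cos θ) ^ 2 := by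
      have := Real.sin_sq_add_cos_sq θ
      ring_nf
      nlinarith [Real.sin_sq_add_cos_sq θ]
    rw [ContinuousLinearMap.smulRight_one_eq_toSpanSingleton, ContinuousLinearMap.det_toSpanSingleton, hsq, Real.sqrt_sq hpos.le, abs_of_pos hpos,
      ← ENNReal.ofReal_mul hpos.le, mul_inv_cancel₀ hpos.ne', ENNReal.ofReal_one]
  rw [setLIntegral_congr_fun measurableSet_Ioo hcong]
  rw [setLIntegral_one, Real.volume_Ioo]
  congr 1
  ring

lemma chord (A q : ℝ) :
    ∫⁻ t : ℝ, ENNReal.ofReal (√(A - (t - q) ^ 2))⁻¹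
      = if 0 < A then ENNReal.ofReal π else 0 := by
  have htr : ∫⁻ t : ℝ, ENNReal.ofReal (√(A - (t - q) ^ 2))⁻¹
      = ∫⁻ t : ℝ, ENNReal.ofReal (√(A - t ^ 2))⁻¹ := by
    have hmg : Measurable fun t : ℝ => ENNReal.ofReal (√(A - t ^ 2))⁻¹ :=
      ((Real.continuous_sqrt.comp (continuous_const.sub (continuous_pow 2))).measurable.inv).ennreal_ofReal
    exact (measurePreserving_sub_right volume q).lintegral_comp hmg
  rw [htr]
  split_ifs with hA
  · have h : A = (√A) ^ 2 := (Real.sq_sqrt hA.le).symm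
    calc ∫⁻ t : ℝ, ENNReal.ofReal (√(A - t ^ 2))⁻¹
        = ∫⁻ t : ℝ, ENNReal.ofReal (√((√A) ^ 2 - t ^ 2))⁻¹ := by rw [← h]
      _ = ENNReal.ofReal π := chord0 (Real.sqrt_pos.mpr hA)
  · have : ∀ t : ℝ, ENNReal.ofReal (√(A - t ^ 2))⁻¹ = 0 := by
      intro t
      rw [Real.sqrt_eq_zero_of_nonpos (by nlinarith [sq_nonneg t]), inv_zero, ENNReal.ofReal_zero]
    simp [this]

lemma nonsep_line {m : ℕ} (hm : 0 < m) (c : Fin m → EuclideanSpace ℝ (Fin 2))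
    (rad : Fin m → ℝ) (hrad : ∀ i, 0 < rad i)
    (hNS : ¬ ∃ (u : EuclideanSpace ℝ (Fin 2)) (s : ℝ), ‖u‖ = 1 ∧
      (∀ i, ∀ x ∈ Metric.closedBall (c i) (rad i), ⟪x, u⟫ ≠ s) ∧
      (∃ i, ∀ x ∈ Metric.closedBall (c i) (rad i), ⟪x, u⟫ < s) ∧
      (∃ j, ∀ x ∈ Metric.closedBall (c j) (rad j), s < ⟪x, u⟫))
    (K : Set (EuclideanSpace ℝ (Fin 2)))
    (hK : K = convexHull ℝ (⋃ i, Metric.closedBall (c i) (rad i)))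
    (u : EuclideanSpace ℝ (Fin 2)) (hu : ‖u‖ = 1) (s : ℝ)
    (hs : ∃ x ∈ K, ⟪x, u⟫ = s) :
    ∃ j, |⟪c j, u⟫ - s| ≤ rad j := by
  by_contra hcon
  push_neg at hcon
  have hball : ∀ j, ∀ x ∈ Metric.closedBall (c j) (rad j), |⟪x, u⟫ - ⟪c j, u⟫| ≤ rad j := by
    intro j x hx
    have h1 : ⟪x, u⟫ - ⟪c j, u⟫ = ⟪x - c j, u⟫ := (inner_sub_left _ _ _).symm
    rw [h1]
    calc |⟪x - c j, u⟫| ≤ ‖x - c j‖ * ‖u‖ := abs_real_inner_le_norm _ _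
      _ = ‖x - c j‖ := by rw [hu, mul_one]
      _ ≤ rad j := by rwa [← dist_eq_norm, ← Metric.mem_closedBall]
  have htype : ∀ j, (∀ x ∈ Metric.closedBall (c j) (rad j), ⟪x, u⟫ < s) ∨
      (∀ x ∈ Metric.closedBall (c j) (rad j), s < ⟪x, u⟫) := by
    intro j
    rcases lt_abs.mp (hcon j) with h | h
    · right
      intro x hx
      have := abs_le.mp (hball j x hx)
      linarith [this.1, this.2]
    · left
      intro x hx
      have := abs_le.mp (hball j x hx)
      linarith [this.1, this.2]
  have hlin : IsLinearMap ℝ (fun x : EuclideanSpace ℝ (Fin 2) => ⟪x, u⟫) :=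
    ⟨fun a b => inner_add_left _ _ _, fun r a => real_inner_smul_left _ _ _⟩
  obtain ⟨x0, hx0K, hx0⟩ := hs
  by_cases hA : ∃ j, ∀ x ∈ Metric.closedBall (c j) (rad j), ⟪x, u⟫ < s
  · by_cases hB : ∃ j, ∀ x ∈ Metric.closedBall (c j) (rad j), s < ⟪x, u⟫
    · refine hNS ⟨u, s, hu, fun i x hx => ?_, hA, hB⟩
      rcases htype i with h | h
      · exact (h x hx).ne
      · exact (h x hx).ne'
    · have hall : ∀ j, ∀ x ∈ Metric.closedBall (c j) (rad j), ⟪x, u⟫ < s :=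
        fun j => (htype j).resolve_right (fun h => hB ⟨j, h⟩)
      have hsub : K ⊆ {x | ⟪x, u⟫ < s} := by
        rw [hK]
        refine convexHull_min (Set.iUnion_subset fun j x hx => hall j x hx)
          (convex_halfSpace_lt hlin s)
      exact absurd hx0 (ne_of_lt (hsub hx0K))
  · have hall : ∀ j, ∀ x ∈ Metric.closedBall (c j) (rad j), s < ⟪x, u⟫ :=
      fun j => (htype j).resolve_left (fun h => hA ⟨j, h⟩)
    have hsub : K ⊆ {x | s < ⟪x, u⟫} := by
      rw [hK]
      refine convexHull_min (Set.iUnion_subset fun j x hx => hall j x hx)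
        (convex_halfSpace_gt hlin s)
    exact absurd hx0 (ne_of_gt (hsub hx0K))

lemma exists_coord (u : EuclideanSpace ℝ (Fin 2)) (hu : ‖u‖ = 1) :
    ∃ (Φ : ℝ × ℝ → EuclideanSpace ℝ (Fin 2)) (κ : EuclideanSpace ℝ (Fin 2) → ℝ),
      MeasurePreserving Φ volume volume ∧
      (∀ z, ⟪Φ z, u⟫ = z.1) ∧
      (∀ (z : ℝ × ℝ) (x : EuclideanSpace ℝ (Fin 2)),
        ‖Φ z - x‖ ^ 2 = (z.1 - ⟪x, u⟫) ^ 2 + (z.2 - κ x) ^ 2) := by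
  classical
  set v : EuclideanSpace ℝ (Fin 2) := (WithLp.equiv 2 (Fin 2 → ℝ)).symm ![-(u 1), u 0] with hv
  have hv0 : v 0 = -(u 1) := rfl
  have hv1 : v 1 = u 0 := rfl
  have hinner_form : ∀ x y : EuclideanSpace ℝ (Fin 2), ⟪x, y⟫ = x 0 * y 0 + x 1 * y 1 := by
    intro x y
    simp [PiLp.inner_apply, Fin.sum_univ_two]; ring
  have h00 : u 0 * u 0 + u 1 * u 1 = 1 := by
    have := real_inner_self_eq_norm_sq u
    rw [hinner_form, hu] at this
    linarith
  have huu : ⟪u, u⟫ = 1 := by rw [hinner_form]; linarith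
  have hvv : ⟪v, v⟫ = 1 := by rw [hinner_form, hv0, hv1]; ring_nf; linarith
  have huv : ⟪u, v⟫ = 0 := by rw [hinner_form, hv0, hv1]; ring
  have hvu : ⟪v, u⟫ = 0 := by rw [real_inner_comm]; exact huv
  have hON : Orthonormal ℝ ![u, v] := by
    rw [orthonormal_iff_ite]
    intro i j
    fin_cases i <;> fin_cases j <;>
      simp [huu, hvv, huv, hvu] <;> left <;>
        nlinarith [norm_nonneg v, real_inner_self_eq_norm_sq v, hu]
  have hsp : ⊤ ≤ Submodule.span ℝ (Set.range ![u, v]) := by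
    rw [hON.linearIndependent.span_eq_top_of_card_eq_finrank (by simp)]
  set B : OrthonormalBasis (Fin 2) ℝ (EuclideanSpace ℝ (Fin 2)) :=
    OrthonormalBasis.mk hON hsp with hB
  have hB0 : B 0 = u := by rw [hB, OrthonormalBasis.coe_mk]; rfl
  set Φ : ℝ × ℝ → EuclideanSpace ℝ (Fin 2) :=
    fun z => B.repr.symm ((WithLp.equiv 2 (Fin 2 → ℝ)).symm ![z.1, z.2]) with hΦ
  have hmp : MeasurePreserving Φ volume volume := by
    have h1 := B.measurePreserving_repr_symm
    have h2 := (EuclideanSpace.volume_preserving_symm_measurableEquiv_toLp (Fin 2)).symm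
    have h3 := (volume_preserving_finTwoArrow ℝ).symm
    have heq : Φ = B.repr.symm ∘ (⇑(MeasurableEquiv.toLp 2 (Fin 2 → ℝ)) ∘
        ⇑(MeasurableEquiv.finTwoArrow (α := ℝ)).symm) := by
      funext z
      show Φ z = B.repr.symm ((MeasurableEquiv.toLp 2 (Fin 2 → ℝ))
        ((MeasurableEquiv.finTwoArrow).symm z))
      rw [hΦ]
      show B.repr.symm _ = B.repr.symm _
      congr 1
    rw [heq]
    exact h1.comp (h2.comp h3)
  have hrepr : ∀ z : ℝ × ℝ, B.repr (Φ z) = (WithLp.equiv 2 (Fin 2 → ℝ)).symm ![z.1, z.2] :=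
    fun z => B.repr.apply_symm_apply _
  have hcoord : ∀ x : EuclideanSpace ℝ (Fin 2), B.repr x 0 = ⟪x, u⟫ := by
    intro x
    rw [B.repr_apply_apply x 0, hB0, real_inner_comm]
  have hinner : ∀ z, ⟪Φ z, u⟫ = z.1 := by
    intro z
    rw [← hcoord, hrepr]
    rfl
  refine ⟨Φ, fun x => B.repr x 1, hmp, hinner, ?_⟩
  intro z x
  have hx : Φ (B.repr x 0, B.repr x 1) = x := by
    have : (WithLp.equiv 2 (Fin 2 → ℝ)).symm ![B.repr x 0, B.repr x 1] = B.repr x := by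
      ext i
      fin_cases i <;> rfl
    show B.repr.symm ((WithLp.equiv 2 (Fin 2 → ℝ)).symm ![B.repr x 0, B.repr x 1]) = x
    rw [this, B.repr.symm_apply_apply]
  have hdist : ∀ z w : ℝ × ℝ, dist (Φ z) (Φ w) ^ 2 = (z.1 - w.1) ^ 2 + (z.2 - w.2) ^ 2 := by
    intro z w
    rw [hΦ]
    rw [B.repr.symm.dist_map]
    rw [EuclideanSpace.dist_eq]
    rw [Real.sq_sqrt (by positivity)]
    simp [Fin.sum_univ_two, Real.dist_eq, sq_abs]
  have := hdist z (B.repr x 0, B.repr x 1)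
  rw [hx] at this
  rw [← dist_eq_norm, this, hcoord]

/-- Theorem 6.1 (packing counterpart of Falconer's bound): let `K` be the convex hull of a
non-separable family of closed disks in `ℝ²` with radii `rad i`, and let `D = 2 ∑ rad i`
be the NS-diameter. If planks `P i` of widths `w i` form an `r`-fold packing in `K`, then
`∑ w i ≤ r D`. -/
theorem sum_plank_widths_le_of_packing (m N r : ℕ) (hm : 0 < m)
    (c : Fin m → EuclideanSpace ℝ (Fin 2)) (rad : Fin m → ℝ) (hrad : ∀ i, 0 < rad i)
    (hNS : ¬ ∃ (u : EuclideanSpace ℝ (Fin 2)) (s : ℝ), ‖u‖ = 1 ∧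
      (∀ i, ∀ x ∈ Metric.closedBall (c i) (rad i), ⟪x, u⟫ ≠ s) ∧
      (∃ i, ∀ x ∈ Metric.closedBall (c i) (rad i), ⟪x, u⟫ < s) ∧
      (∃ j, ∀ x ∈ Metric.closedBall (c j) (rad j), s < ⟪x, u⟫))
    (K : Set (EuclideanSpace ℝ (Fin 2)))
    (hK : K = convexHull ℝ (⋃ i, Metric.closedBall (c i) (rad i)))
    (u : Fin N → EuclideanSpace ℝ (Fin 2)) (hu : ∀ i, ‖u i‖ = 1)
    (a w : Fin N → ℝ) (hw : ∀ i, 0 ≤ w i)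
    (P : Fin N → Set (EuclideanSpace ℝ (Fin 2)))
    (hP : ∀ i, P i = {x | a i ≤ ⟪x, u i⟫ ∧ ⟪x, u i⟫ ≤ a i + w i})
    (hproj : ∀ i, Set.Icc (a i) (a i + w i) ⊆ (fun x => ⟪x, u i⟫) '' K)
    (hpack : ∀ x ∈ K, Nat.card {i : Fin N // x ∈ interior (P i ∩ K)} ≤ r) :
    (∑ i, w i) ≤ r * (2 * ∑ j, rad j) := by
  classical
  set g : Fin m → EuclideanSpace ℝ (Fin 2) → ENNReal :=
    fun j x => ENNReal.ofReal (√(rad j ^ 2 - ‖x - c j‖ ^ 2))⁻¹ with hg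
  have hgmeas : ∀ j, Measurable (g j) := by
    intro j
    exact ((Real.continuous_sqrt.comp (continuous_const.sub
      ((continuous_id.sub continuous_const).norm.pow 2))).measurable.inv).ennreal_ofReal
  set f : EuclideanSpace ℝ (Fin 2) → ENNReal := fun x => ∑ j, g j x with hf
  have hfmeas : Measurable f := Finset.measurable_sum _ (fun j _ => hgmeas j)
  have hcontinner : ∀ y : EuclideanSpace ℝ (Fin 2),
      Continuous fun x : EuclideanSpace ℝ (Fin 2) => (⟪x, y⟫ : ℝ) :=
    fun y => continuous_id.inner continuous_const
  have hPmeas : ∀ i, MeasurableSet (P i) := by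
    intro i
    rw [hP i]
    have : {x : EuclideanSpace ℝ (Fin 2) | a i ≤ ⟪x, u i⟫ ∧ ⟪x, u i⟫ ≤ a i + w i}
        = (fun x : EuclideanSpace ℝ (Fin 2) => (⟪x, u i⟫ : ℝ)) ⁻¹' Icc (a i) (a i + w i) := rfl
    rw [this]
    exact (hcontinner (u i)).measurable measurableSet_Icc
  -- chord integral in adapted coordinates
  have hline : ∀ (Φ : ℝ × ℝ → EuclideanSpace ℝ (Fin 2)) (κ : EuclideanSpace ℝ (Fin 2) → ℝ)
      (uu : EuclideanSpace ℝ (Fin 2)),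
      (∀ (z : ℝ × ℝ) (x : EuclideanSpace ℝ (Fin 2)),
        ‖Φ z - x‖ ^ 2 = (z.1 - ⟪x, uu⟫) ^ 2 + (z.2 - κ x) ^ 2) →
      ∀ (j : Fin m) (s : ℝ), ∫⁻ t, g j (Φ (s, t))
        = if 0 < rad j ^ 2 - (s - ⟪c j, uu⟫) ^ 2 then ENNReal.ofReal π else 0 := by
    intro Φ κ uu hnorm j s
    have hrw : ∀ t : ℝ, g j (Φ (s, t)) =
        ENNReal.ofReal (√((rad j ^ 2 - (s - ⟪c j, uu⟫) ^ 2) - (t - κ (c j)) ^ 2))⁻¹ := by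
      intro t
      have h2 : rad j ^ 2 - ‖Φ (s, t) - c j‖ ^ 2
          = (rad j ^ 2 - (s - ⟪c j, uu⟫) ^ 2) - (t - κ (c j)) ^ 2 := by
        rw [hnorm (s, t) (c j)]; ring
      simp only [hg]
      rw [h2]
    simp_rw [hrw]
    exact chord _ _
  -- ite to indicator
  have hite : ∀ (j : Fin m) (p s : ℝ),
      (if 0 < rad j ^ 2 - (s - p) ^ 2 then ENNReal.ofReal π else 0)
        = (Ioo (p - rad j) (p + rad j)).indicator (fun _ => ENNReal.ofReal π) s := by
    intro j p s
    by_cases hs : s ∈ Ioo (p - rad j) (p + rad j)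
    · rw [if_pos (by rcases hs with ⟨h1', h2'⟩; nlinarith), Set.indicator_of_mem hs]
    · rw [Set.indicator_of_notMem hs, if_neg]
      rw [mem_Ioo, not_and_or] at hs
      intro hlt
      rcases hs with h | h <;> push_neg at h <;> nlinarith [hrad j]
  -- total mass of each bump
  have hmass : ∀ j, ∫⁻ x, g j x = ENNReal.ofReal π * ENNReal.ofReal (2 * rad j) := by
    intro j
    have h1 : ‖(EuclideanSpace.single 0 (1:ℝ) : EuclideanSpace ℝ (Fin 2))‖ = 1 := by
      simp [EuclideanSpace.norm_single]
    obtain ⟨Φ, κ, hmp, hinner, hnorm⟩ := exists_coord _ h1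
    rw [← hmp.lintegral_comp (hgmeas j), Measure.volume_eq_prod,
      lintegral_prod (fun z => g j (Φ z)) ((hgmeas j).comp hmp.measurable).aemeasurable]
    rw [lintegral_congr (fun s => hline Φ κ _ hnorm j s)]
    rw [lintegral_congr (fun s => hite j _ s), lintegral_indicator measurableSet_Ioo,
      setLIntegral_const, Real.volume_Ioo]
    congr 1
    ring_nf
  -- lower bound on each plank integral
  have hplank : ∀ i, ENNReal.ofReal π * ENNReal.ofReal (w i)
      ≤ ∫⁻ x, (P i).indicator f x := by
    intro i
    obtain ⟨Φ, κ, hmp, hinner, hnorm⟩ := exists_coord (u i) (hu i)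
    have hindmeas : Measurable ((P i).indicator f) := hfmeas.indicator (hPmeas i)
    rw [← hmp.lintegral_comp hindmeas]
    have hindrw : ∀ z : ℝ × ℝ, (P i).indicator f (Φ z)
        = (Icc (a i) (a i + w i) ×ˢ (univ : Set ℝ)).indicator (fun z => f (Φ z)) z := by
      intro z
      by_cases hz : Φ z ∈ P i
      · rw [Set.indicator_of_mem hz, Set.indicator_of_mem]
        rw [hP i] at hz
        simp only [Set.mem_setOf_eq] at hz
        rw [hinner z] at hz
        exact ⟨mem_Icc.mpr hz, mem_univ _⟩
      · rw [Set.indicator_of_notMem hz, Set.indicator_of_notMem]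
        intro hzmem
        apply hz
        rw [hP i]
        have := hzmem.1
        rw [mem_Icc] at this
        rw [Set.mem_setOf_eq, hinner z]
        exact this
    rw [lintegral_congr hindrw, lintegral_indicator (measurableSet_Icc.prod MeasurableSet.univ),
      Measure.volume_eq_prod, ← Measure.restrict_prod_eq_prod_univ,
      lintegral_prod (fun z => f (Φ z)) ((hfmeas.comp hmp.measurable).aemeasurable)]
    -- a.e. lower bound on the inner integral
    set Z : Set ℝ := ⋃ j, {⟪c j, u i⟫ - rad j, ⟪c j, u i⟫ + rad j} with hZdef
    have hZnull : volume Z = 0 := by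
      apply measure_iUnion_null
      intro j
      exact measure_union_null (measure_singleton _) (measure_singleton _)
    have hlb : ∀ᵐ s ∂(volume.restrict (Icc (a i) (a i + w i))),
        ENNReal.ofReal π ≤ ∫⁻ t, f (Φ (s, t)) := by
      rw [ae_restrict_iff' measurableSet_Icc]
      filter_upwards [measure_eq_zero_iff_ae_notMem.mp hZnull] with s hsZ hsIcc
      obtain ⟨j, hj⟩ := nonsep_line hm c rad hrad hNS K hK (u i) (hu i) s (by
        obtain ⟨x, hxK, hxs⟩ := hproj i hsIcc
        exact ⟨x, hxK, hxs⟩)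
      have hne1 : s ≠ ⟪c j, u i⟫ - rad j := fun h => hsZ (mem_iUnion.mpr ⟨j, by rw [h]; left; rfl⟩)
      have hne2 : s ≠ ⟪c j, u i⟫ + rad j := fun h => hsZ (mem_iUnion.mpr ⟨j, by rw [h]; right; rfl⟩)
      have habs := abs_le.mp hj
      have hstrict : 0 < rad j ^ 2 - (s - ⟪c j, u i⟫) ^ 2 := by
        rcases lt_or_eq_of_le habs.1 with h1' | h1'
        · rcases lt_or_eq_of_le habs.2 with h2' | h2'
          · nlinarith
          · exact absurd (by linarith : s = ⟪c j, u i⟫ - rad j) hne1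
        · exact absurd (by linarith : s = ⟪c j, u i⟫ + rad j) hne2
      calc ENNReal.ofReal π
          = ∫⁻ t, g j (Φ (s, t)) := by rw [hline Φ κ _ hnorm j s, if_pos hstrict]
        _ ≤ ∫⁻ t, f (Φ (s, t)) := by
            apply lintegral_mono
            intro t
            exact Finset.single_le_sum (f := fun j' => g j' (Φ (s, t)))
              (fun j' _ => zero_le) (Finset.mem_univ j)
    calc ENNReal.ofReal π * ENNReal.ofReal (w i)
        = ∫⁻ _ in Icc (a i) (a i + w i), ENNReal.ofReal π := by
          rw [setLIntegral_const, Real.volume_Icc, add_sub_cancel_left]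
      _ ≤ ∫⁻ s in Icc (a i) (a i + w i), ∫⁻ t, f (Φ (s, t)) := lintegral_mono_ae hlb
  -- hyperplanes are null
  have hnull : ∀ (u' : EuclideanSpace ℝ (Fin 2)), ‖u'‖ = 1 → ∀ b : ℝ,
      volume {x : EuclideanSpace ℝ (Fin 2) | ⟪x, u'⟫ = b} = 0 := by
    intro u' hu' b
    obtain ⟨Φ, κ, hmp, hinner, _⟩ := exists_coord u' hu'
    have hmeasH : MeasurableSet {x : EuclideanSpace ℝ (Fin 2) | ⟪x, u'⟫ = b} :=
      (hcontinner u').measurable (measurableSet_singleton b)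
    have hpre : Φ ⁻¹' {x : EuclideanSpace ℝ (Fin 2) | ⟪x, u'⟫ = b}
        = ({b} : Set ℝ) ×ˢ (univ : Set ℝ) := by
      ext z
      simp only [Set.mem_preimage, Set.mem_setOf_eq, Set.mem_prod, Set.mem_singleton_iff,
        Set.mem_univ, and_true, hinner z]
    rw [← hmp.measure_preimage hmeasH.nullMeasurableSet, hpre, Measure.volume_eq_prod,
      Measure.prod_prod]
    simp
  -- a.e. multiplicity bound
  have hcount : ∀ᵐ x : EuclideanSpace ℝ (Fin 2),
      ∑ i, (P i).indicator f x ≤ (r : ENNReal) * f x := by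
    set Z' : Set (EuclideanSpace ℝ (Fin 2)) := ⋃ i, ({x | ⟪x, u i⟫ = a i} ∪ {x | ⟪x, u i⟫ = a i + w i}) with hZ'def
    have hZ'null : volume Z' = 0 :=
      measure_iUnion_null fun i => measure_union_null (hnull _ (hu i) _) (hnull _ (hu i) _)
    filter_upwards [measure_eq_zero_iff_ae_notMem.mp hZ'null] with x hx
    by_cases hfx : f x = 0
    · calc ∑ i, (P i).indicator f x ≤ ∑ _i : Fin N, f x :=
            Finset.sum_le_sum (fun i _ => Set.indicator_le_self _ _ x)
        _ = 0 := by simp [hfx]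
        _ ≤ (r : ENNReal) * f x := zero_le
    · obtain ⟨j, hj⟩ : ∃ j, g j x ≠ 0 := by
        by_contra hcon
        push_neg at hcon
        exact hfx (Finset.sum_eq_zero fun j _ => hcon j)
      have hpos : 0 < rad j ^ 2 - ‖x - c j‖ ^ 2 := by
        by_contra hnp
        push_neg at hnp
        apply hj
        simp only [hg]
        rw [Real.sqrt_eq_zero_of_nonpos hnp, inv_zero, ENNReal.ofReal_zero]
      have hxball : x ∈ Metric.ball (c j) (rad j) := by
        rw [Metric.mem_ball, dist_eq_norm]
        nlinarith [norm_nonneg (x - c j), hrad j]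
      have hballK : Metric.ball (c j) (rad j) ⊆ K := by
        rw [hK]
        exact (Metric.ball_subset_closedBall.trans
          (Set.subset_iUnion (fun i => Metric.closedBall (c i) (rad i)) j)).trans
          (subset_convexHull ℝ _)
      have hxK : x ∈ interior K := interior_maximal hballK Metric.isOpen_ball hxball
      have hmem : ∀ i, x ∈ P i → x ∈ interior (P i ∩ K) := by
        intro i hxi
        have hxi' := hxi
        rw [hP i] at hxi'
        have hne1 : ⟪x, u i⟫ ≠ a i := fun h =>
          hx (mem_iUnion.mpr ⟨i, Or.inl h⟩)
        have hne2 : ⟪x, u i⟫ ≠ a i + w i := fun h =>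
          hx (mem_iUnion.mpr ⟨i, Or.inr h⟩)
        have hopen : IsOpen {y : EuclideanSpace ℝ (Fin 2) | a i < ⟪y, u i⟫ ∧ ⟪y, u i⟫ < a i + w i} := by
          have : {y : EuclideanSpace ℝ (Fin 2) | a i < ⟪y, u i⟫ ∧ ⟪y, u i⟫ < a i + w i}
              = (fun y : EuclideanSpace ℝ (Fin 2) => (⟪y, u i⟫ : ℝ)) ⁻¹' Ioo (a i) (a i + w i) := rfl
          rw [this]
          exact isOpen_Ioo.preimage (hcontinner (u i))
        have hsub : {y : EuclideanSpace ℝ (Fin 2) | a i < ⟪y, u i⟫ ∧ ⟪y, u i⟫ < a i + w i}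
            ∩ interior K ⊆ P i ∩ K := by
          intro y hy
          exact Set.mem_inter (by rw [hP i]; exact ⟨hy.1.1.le, hy.1.2.le⟩)
            (interior_subset hy.2)
        refine interior_maximal hsub (hopen.inter isOpen_interior) (Set.mem_inter ?_ hxK)
        exact ⟨lt_of_le_of_ne hxi'.1 (Ne.symm hne1), lt_of_le_of_ne hxi'.2 hne2⟩
      have hcard := hpack x (interior_subset hxK)
      have hcardle : (Finset.univ.filter (fun i => x ∈ P i)).card ≤ r := by
        calc (Finset.univ.filter (fun i => x ∈ P i)).card
            ≤ (Finset.univ.filter (fun i => x ∈ interior (P i ∩ K))).card :=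
              Finset.card_le_card (by
                intro i hi
                rw [Finset.mem_filter] at hi ⊢
                exact ⟨hi.1, hmem i hi.2⟩)
          _ = Nat.card {i : Fin N // x ∈ interior (P i ∩ K)} := by
              rw [Nat.card_eq_fintype_card, Fintype.card_subtype]
          _ ≤ r := hcard
      calc ∑ i, (P i).indicator f x
          = ∑ i, if x ∈ P i then f x else 0 := by
            refine Finset.sum_congr rfl fun i _ => ?_
            rw [Set.indicator_apply]
        _ = (Finset.univ.filter (fun i => x ∈ P i)).card • f x := by
            rw [← Finset.sum_filter, Finset.sum_const]
        _ = ((Finset.univ.filter (fun i => x ∈ P i)).card : ENNReal) * f x := by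
            rw [nsmul_eq_mul]
        _ ≤ (r : ENNReal) * f x := by
            apply mul_le_mul_left
            exact_mod_cast hcardle
  -- combine
  have hmain : ENNReal.ofReal π * ENNReal.ofReal (∑ i, w i)
      ≤ ENNReal.ofReal π * ((r : ENNReal) * ENNReal.ofReal (2 * ∑ j, rad j)) := by
    calc ENNReal.ofReal π * ENNReal.ofReal (∑ i, w i)
        = ∑ i, ENNReal.ofReal π * ENNReal.ofReal (w i) := by
          rw [ENNReal.ofReal_sum_of_nonneg (fun i _ => hw i), Finset.mul_sum]
      _ ≤ ∑ i, ∫⁻ x, (P i).indicator f x := Finset.sum_le_sum (fun i _ => hplank i)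
      _ = ∫⁻ x, ∑ i, (P i).indicator f x :=
          (lintegral_finset_sum _ (fun i _ => hfmeas.indicator (hPmeas i))).symm
      _ ≤ ∫⁻ x, (r : ENNReal) * f x := lintegral_mono_ae hcount
      _ = (r : ENNReal) * ∫⁻ x, f x := lintegral_const_mul _ hfmeas
      _ = (r : ENNReal) * ∑ j, ∫⁻ x, g j x := by
          rw [lintegral_finset_sum _ (fun j _ => hgmeas j)]
      _ = ENNReal.ofReal π * ((r : ENNReal) * ENNReal.ofReal (2 * ∑ j, rad j)) := by
          simp_rw [hmass]
          rw [← Finset.mul_sum, ← ENNReal.ofReal_sum_of_nonneg (fun j _ => by nlinarith [hrad j])]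
          have : ∑ j, 2 * rad j = 2 * ∑ j, rad j := by rw [Finset.mul_sum]
          rw [this]
          ring
  have hπ : (0:ℝ) < π := Real.pi_pos
  have hcancel := (ENNReal.mul_le_mul_iff_right (a := ENNReal.ofReal π)
    (by simp [ENNReal.ofReal_eq_zero, not_le, hπ]) ENNReal.ofReal_ne_top).mp hmain
  have hsum_nonneg : (0:ℝ) ≤ 2 * ∑ j, rad j := by
    have := Finset.sum_nonneg (fun j (_ : j ∈ Finset.univ) => (hrad j).le)
    linarith
  have : ENNReal.ofReal (∑ i, w i) ≤ ENNReal.ofReal ((r : ℝ) * (2 * ∑ j, rad j)) := by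
    rwa [ENNReal.ofReal_mul (by positivity), ENNReal.ofReal_natCast]
  rw [ENNReal.ofReal_le_ofReal_iff (mul_nonneg (Nat.cast_nonneg r) hsum_nonneg)] at this
  exact this
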